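/- Under the Gaussian model setup, lim_{n→∞} g_n = 2W Σ_{j : μ(j) > 0} μ(j) H(ε/μ(j) − 1), where H is the Heaviside step function (H(x) = 1 for x > 0, H(x) = 1/2 for x = 0, H(x) = 0 for x < 0). -/

import Mathlib

open Real MeasureTheory ProbabilityTheory Filter Topology

/-- Generalization gap `g_n = W · E[⟨sign(u) − sign(u − ε·sign(u)), μ⟩]` in the Gaussian
model, where `u` has independent coordinates `u(j) ~ N(μ(j), σ(j)²/n)`. -/
noncomputable def gaussGap (d : ℕ) (W ε : ℝ) (μ σ : Fin d → ℝ) (n : ℕ) : ℝ :=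
  W * ∫ u : Fin d → ℝ,
      (∑ j, (Real.sign (u j) - Real.sign (u j - ε * Real.sign (u j))) * μ j)
    ∂(Measure.pi fun j => gaussianReal (μ j) (Real.toNNReal ((σ j) ^ 2 / n)))

/-- The Heaviside step function. -/
noncomputable def heaviside (x : ℝ) : ℝ := if 0 < x then 1 else if x = 0 then 1/2 else 0

namespace GaussGapAux

/-- The per-coordinate integrand. -/
noncomputable def phi (ε u : ℝ) : ℝ := Real.sign u - Real.sign (u - ε * Real.sign u)

lemma measurable_rsign : Measurable Real.sign := by
  unfold Real.sign
  refine Measurable.ite (measurableSet_lt measurable_id measurable_const) measurable_const ?_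
  exact Measurable.ite (measurableSet_lt measurable_const measurable_id) measurable_const
    measurable_const

lemma measurable_phi (ε : ℝ) : Measurable (phi ε) := by
  unfold phi
  exact measurable_rsign.sub
    (measurable_rsign.comp (measurable_id.sub (measurable_rsign.const_mul ε)))

lemma abs_rsign_le (x : ℝ) : |Real.sign x| ≤ 1 := by
  rcases Real.sign_apply_eq x with h | h | h <;> rw [h] <;> norm_num

lemma abs_phi_le (ε u : ℝ) : |phi ε u| ≤ 2 := by
  unfold phi
  calc |Real.sign u - Real.sign (u - ε * Real.sign u)|
      ≤ |Real.sign u| + |Real.sign (u - ε * Real.sign u)| := abs_sub _ _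
    _ ≤ 1 + 1 := add_le_add (abs_rsign_le _) (abs_rsign_le _)
    _ = 2 := by norm_num

lemma phi_of_Ioo {ε u : ℝ} (h0 : 0 < u) (hε : u < ε) : phi ε u = 2 := by
  unfold phi
  rw [Real.sign_of_pos h0, mul_one, Real.sign_of_neg (by linarith)]
  norm_num

lemma phi_of_gt {ε u : ℝ} (hε : 0 < ε) (h : ε < u) : phi ε u = 0 := by
  unfold phi
  have h0 : 0 < u := hε.trans h
  rw [Real.sign_of_pos h0, mul_one, Real.sign_of_pos (by linarith)]
  norm_num

/-- Marginal of a product of probability measures. -/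
lemma pi_map_eval {ι : Type*} [Fintype ι] {α : ι → Type*} [∀ i, MeasurableSpace (α i)]
    (μ : ∀ i, Measure (α i)) [∀ i, IsProbabilityMeasure (μ i)] (i : ι) :
    (Measure.pi μ).map (Function.eval i) = μ i := by
  classical
  ext s hs
  rw [Measure.map_apply (measurable_pi_apply i) hs, ← Set.univ_pi_update_univ, Measure.pi_pi]
  rw [Finset.prod_eq_single i]
  · simp
  · intro j _ hj
    simp [Function.update_of_ne hj]
  · simp

lemma integrable_of_bdd {α : Type*} [MeasurableSpace α] {μ : Measure α}
    [IsProbabilityMeasure μ] {f : α → ℝ} (hf : AEStronglyMeasurable f μ) (C : ℝ)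
    (h : ∀ x, |f x| ≤ C) : Integrable f μ :=
  Integrable.mono' (integrable_const C) hf (ae_of_all _ fun x => h x)

/-- The standard Gaussian is symmetric under negation. -/
lemma gauss_map_neg : (gaussianReal 0 1).map (fun x : ℝ => -x) = gaussianReal 0 1 := by
  have : (fun x : ℝ => -x) = (fun x : ℝ => (-1 : ℝ) * x) := by funext x; ring
  rw [this, gaussianReal_map_const_mul (-1 : ℝ)]
  congr 1
  · ring
  · apply NNReal.coe_injective
    norm_num

lemma integral_rsign_gauss : ∫ x, Real.sign x ∂(gaussianReal 0 1) = 0 := by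
  have h1 : ∫ x, Real.sign x ∂(gaussianReal 0 1)
      = ∫ x, Real.sign (-x) ∂(gaussianReal 0 1) := by
    conv_lhs => rw [← gauss_map_neg]
    rw [integral_map measurable_neg.aemeasurable measurable_rsign.aestronglyMeasurable]
  have h2 : ∫ x, Real.sign (-x) ∂(gaussianReal 0 1)
      = - ∫ x, Real.sign x ∂(gaussianReal 0 1) := by
    simp_rw [Real.sign_neg]
    exact integral_neg _
  linarith [h1, h2]

lemma heaviside_of_lt {m ε : ℝ} (hm : 0 < m) (h : m < ε) : heaviside (ε / m - 1) = 1 := by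
  unfold heaviside
  rw [if_pos]
  rw [sub_pos, lt_div_iff₀ hm, one_mul]
  exact h

lemma heaviside_of_gt {m ε : ℝ} (hm : 0 < m) (h : ε < m) : heaviside (ε / m - 1) = 0 := by
  unfold heaviside
  have h1 : ε / m - 1 < 0 := by
    rw [sub_neg, div_lt_iff₀ hm, one_mul]
    exact h
  rw [if_neg (by linarith), if_neg (by linarith)]

lemma heaviside_of_eq {m : ℝ} : heaviside (m / m - 1) = 1/2 ∨ m = 0 := by
  rcases eq_or_ne m 0 with h | h
  · exact Or.inr h
  · left
    unfold heaviside
    rw [div_self h]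
    norm_num

/-- The key one-dimensional limit. -/
lemma tendsto_integral_phi {m s ε : ℝ} (hm : 0 < m) (hs : 0 < s) (hε : 0 < ε) :
    Tendsto (fun n : ℕ => ∫ x, phi ε x ∂(gaussianReal m (Real.toNNReal (s ^ 2 / n)))) atTop
      (𝓝 (2 * heaviside (ε / m - 1))) := by
  set γ := gaussianReal 0 1 with hγ
  set c : ℕ → ℝ := fun n => Real.sqrt (s ^ 2 / n) with hc
  have hc_nonneg : ∀ n, 0 ≤ c n := fun n => Real.sqrt_nonneg _
  have hc_sq : ∀ n : ℕ, (c n) ^ 2 = s ^ 2 / n := by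
    intro n
    exact Real.sq_sqrt (by positivity)
  -- change of variables
  have key : ∀ n : ℕ, ∫ x, phi ε x ∂(gaussianReal m (Real.toNNReal (s ^ 2 / n)))
      = ∫ x, phi ε (c n * x + m) ∂γ := by
    intro n
    have hmap1 : γ.map (fun x => c n * x) = gaussianReal 0 (NNReal.mk ((c n) ^ 2) (sq_nonneg _)) := by
      rw [hγ, gaussianReal_map_const_mul (c n)]
      norm_num
    have hmap2 : (γ.map (fun x => c n * x)).map (fun x => x + m)
        = gaussianReal m (Real.toNNReal (s ^ 2 / n)) := by
      rw [hmap1, gaussianReal_map_add_const m]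
      congr 1
      · ring
      · ext
        rw [Real.coe_toNNReal _ (by positivity)]
        exact hc_sq n
    rw [← hmap2,
      integral_map (measurable_add_const m).aemeasurable
        (measurable_phi ε).aestronglyMeasurable]
    exact integral_map (measurable_const_mul (c n)).aemeasurable
      ((measurable_phi ε).comp (measurable_add_const m)).aestronglyMeasurable
  simp_rw [key]
  -- c n → 0
  have hc0 : Tendsto c atTop (𝓝 0) := by
    have h1 : Tendsto (fun n : ℕ => s ^ 2 / (n : ℝ)) atTop (𝓝 0) :=
      tendsto_const_div_atTop_nhds_zero_nat _
    have := (Real.continuous_sqrt.tendsto 0).comp h1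
    simpa [hc, Function.comp_def] using this
  have hcx : ∀ x : ℝ, Tendsto (fun n => c n * x + m) atTop (𝓝 m) := by
    intro x
    have : Tendsto (fun n => c n * x + m) atTop (𝓝 (0 * x + m)) :=
      ((hc0.mul_const x).add tendsto_const_nhds)
    simpa using this
  have hc_pos : ∀ n : ℕ, 1 ≤ n → 0 < c n := by
    intro n hn
    apply Real.sqrt_pos.mpr
    have : (0 : ℝ) < n := by exact_mod_cast hn
    positivity
  -- pick the a.e. limit function depending on case
  rcases lt_trichotomy m ε with hlt | heq | hgt
  · -- m < ε : limit is 2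
    rw [heaviside_of_lt hm hlt, mul_one]
    have h2 : (2 : ℝ) = ∫ _ : ℝ, (2 : ℝ) ∂γ := by simp
    rw [h2]
    refine tendsto_integral_filter_of_dominated_convergence (fun _ => (2 : ℝ))
      (Eventually.of_forall fun n =>
        (((measurable_phi ε).comp ((measurable_id.const_mul (c n)).add_const m))
          ).aestronglyMeasurable)
      (Eventually.of_forall fun n => ae_of_all _ fun x => by
        simpa using abs_phi_le ε (c n * x + m)) (integrable_const 2) ?_
    refine ae_of_all _ fun x => ?_
    have hmem : ∀ᶠ n in atTop, c n * x + m ∈ Set.Ioo (0 : ℝ) ε :=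
      (hcx x).eventually (Ioo_mem_nhds hm hlt)
    refine Tendsto.congr' ?_ tendsto_const_nhds
    filter_upwards [hmem] with n hn
    exact (phi_of_Ioo hn.1 hn.2).symm
  · -- m = ε : limit is 1
    subst heq
    rcases heaviside_of_eq (m := m) with hH | hH
    swap
    · exact absurd hH hm.ne'
    rw [hH]
    have hsint : Integrable (fun x => Real.sign x) γ :=
      integrable_of_bdd measurable_rsign.aestronglyMeasurable 1 abs_rsign_le
    have hgint : ∫ x, (1 - Real.sign x) ∂γ = 1 := by
      rw [integral_sub (integrable_const 1) hsint, hγ, integral_rsign_gauss]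
      simp
    have h1 : (2 : ℝ) * (1/2) = ∫ x, (1 - Real.sign x) ∂γ := by rw [hgint]; norm_num
    rw [h1]
    refine tendsto_integral_filter_of_dominated_convergence (fun _ => (2 : ℝ))
      (Eventually.of_forall fun n =>
        (((measurable_phi m).comp ((measurable_id.const_mul (c n)).add_const m))
          ).aestronglyMeasurable)
      (Eventually.of_forall fun n => ae_of_all _ fun x => by
        simpa using abs_phi_le m (c n * x + m)) (integrable_const 2) ?_
    have h0 : γ {0} = 0 := by
      rw [hγ]
      exact (gaussianReal_absolutelyContinuous 0 one_ne_zero) (measure_singleton 0)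
    have hae : ∀ᵐ x ∂γ, x ≠ 0 := by
      rw [ae_iff]
      convert h0 using 2
      ext x
      simp
    filter_upwards [hae] with x hx
    rcases Ne.lt_or_gt hx with hneg | hpos
    · have hval : (1 : ℝ) - Real.sign x = 2 := by rw [Real.sign_of_neg hneg]; norm_num
      rw [hval]
      refine Tendsto.congr' ?_ tendsto_const_nhds
      have hev : ∀ᶠ n in atTop, c n * x + m ∈ Set.Ioo (0 : ℝ) m := by
        filter_upwards [eventually_ge_atTop 1,
          (hcx x).eventually (Ioi_mem_nhds hm)] with n h1 h2
        have hcxn : c n * x < 0 := mul_neg_of_pos_of_neg (hc_pos n h1) hneg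
        exact ⟨h2, by linarith⟩
      filter_upwards [hev] with n hn
      exact (phi_of_Ioo hn.1 hn.2).symm
    · have hval : (1 : ℝ) - Real.sign x = 0 := by rw [Real.sign_of_pos hpos]; norm_num
      rw [hval]
      refine Tendsto.congr' ?_ tendsto_const_nhds
      have hev : ∀ᶠ n in atTop, m < c n * x + m := by
        filter_upwards [eventually_ge_atTop 1] with n h1
        have hcxn : 0 < c n * x := mul_pos (hc_pos n h1) hpos
        linarith
      filter_upwards [hev] with n hn
      exact (phi_of_gt hm hn).symm
  · -- m > ε : limit is 0
    rw [heaviside_of_gt hm hgt, mul_zero]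
    have h0 : (0 : ℝ) = ∫ _ : ℝ, (0 : ℝ) ∂γ := by simp
    rw [h0]
    refine tendsto_integral_filter_of_dominated_convergence (fun _ => (2 : ℝ))
      (Eventually.of_forall fun n =>
        (((measurable_phi ε).comp ((measurable_id.const_mul (c n)).add_const m))
          ).aestronglyMeasurable)
      (Eventually.of_forall fun n => ae_of_all _ fun x => by
        simpa using abs_phi_le ε (c n * x + m)) (integrable_const 2) ?_
    refine ae_of_all _ fun x => ?_
    have hmem : ∀ᶠ n in atTop, c n * x + m ∈ Set.Ioi ε :=
      (hcx x).eventually (Ioi_mem_nhds hgt)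
    refine Tendsto.congr' ?_ tendsto_const_nhds
    filter_upwards [hmem] with n hn
    exact (phi_of_gt hε hn).symm

end GaussGapAux

open GaussGapAux

theorem gaussGap_limit (d : ℕ) (W ε : ℝ) (μ σ : Fin d → ℝ)
    (hW : 0 < W) (hε : 0 < ε) (hμ : ∀ j, 0 ≤ μ j) (hσ : ∀ j, 0 < σ j) :
    Tendsto (fun n : ℕ => gaussGap d W ε μ σ n) atTop
      (𝓝 (2 * W * ∑ j ∈ Finset.univ.filter (fun j => 0 < μ j),
        μ j * heaviside (ε / μ j - 1))) := by
  classical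
  -- Step 1: rewrite gaussGap as a sum of one-dimensional integrals
  have hrw : ∀ n : ℕ, gaussGap d W ε μ σ n
      = W * ∑ j ∈ Finset.univ.filter (fun j => 0 < μ j),
          μ j * ∫ x, phi ε x ∂(gaussianReal (μ j) (Real.toNNReal ((σ j) ^ 2 / n))) := by
    intro n
    unfold gaussGap
    congr 1
    set ν := fun j : Fin d => gaussianReal (μ j) (Real.toNNReal ((σ j) ^ 2 / n)) with hν
    have hint : ∀ j : Fin d,
        Integrable (fun u : Fin d → ℝ => phi ε (u j) * μ j) (Measure.pi ν) := by
      intro j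
      refine integrable_of_bdd
        (((measurable_phi ε).comp (measurable_pi_apply j)).mul_const (μ j)
          ).aestronglyMeasurable (2 * |μ j|) fun u => ?_
      rw [abs_mul]
      exact mul_le_mul_of_nonneg_right (abs_phi_le ε (u j)) (abs_nonneg _)
    have h1 : ∫ u : Fin d → ℝ,
        (∑ j, (Real.sign (u j) - Real.sign (u j - ε * Real.sign (u j))) * μ j)
        ∂(Measure.pi ν) = ∑ j, ∫ u : Fin d → ℝ, phi ε (u j) * μ j ∂(Measure.pi ν) := by
      rw [← integral_finset_sum _ fun j _ => hint j]
      refine integral_congr_ae (ae_of_all _ fun u => ?_)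
      simp [phi]
    rw [h1]
    have h2 : ∀ j : Fin d, ∫ u : Fin d → ℝ, phi ε (u j) * μ j ∂(Measure.pi ν)
        = μ j * ∫ x, phi ε x ∂(ν j) := by
      intro j
      rw [integral_mul_const, mul_comm]
      congr 1
      rw [← pi_map_eval ν j,
        integral_map (measurable_pi_apply j).aemeasurable
          (measurable_phi ε).aestronglyMeasurable]
    simp_rw [h2]
    rw [Finset.sum_filter_of_ne]
    intro j _ hne
    by_contra h
    push_neg at h
    have : μ j = 0 := le_antisymm h (hμ j)
    exact hne (by rw [this, zero_mul])
  simp_rw [hrw]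
  have hfinal : Tendsto (fun n : ℕ => ∑ j ∈ Finset.univ.filter (fun j => 0 < μ j),
      μ j * ∫ x, phi ε x ∂(gaussianReal (μ j) (Real.toNNReal ((σ j) ^ 2 / n)))) atTop
      (𝓝 (∑ j ∈ Finset.univ.filter (fun j => 0 < μ j),
        μ j * (2 * heaviside (ε / μ j - 1)))) := by
    refine tendsto_finset_sum _ fun j hj => ?_
    have hj' : 0 < μ j := (Finset.mem_filter.mp hj).2
    exact (tendsto_integral_phi hj' (hσ j) hε).const_mul (μ j)
  have := hfinal.const_mul W
  convert this using 2
  rw [Finset.mul_sum, Finset.mul_sum]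
  refine Finset.sum_congr rfl fun j _ => by ring
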